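/- Let A be a weighted automaton over V and X ∈ V. Then for every valuation σ : V → ℕ, ⟦A^{X--}⟧ σ = ⟦A⟧ (σ[X ↦ σ X + 1]) + (if σ X = 0 then ⟦A⟧ σ else 0); that is, the decrement construction implements truncated decrement of X on the encoded distribution. -/

import Mathlib

open scoped ENNReal
open Classical

/-- Weighted automata over a commutative alphabet `V` with weights in `ℝ≥0∞`. -/
structure WA (V : Type) where
  Q : Type
  [fin : Fintype Q]
  [dec : DecidableEq Q]
  w : Q → Q → ℝ≥0∞
  lab : Q → Q → Option V
  I : Q → ℝ≥0∞
  F : Q → ℝ≥0∞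

attribute [instance] WA.fin WA.dec

variable {V : Type} [Fintype V] [DecidableEq V]

/-- Weight of a path of length `n`. -/
noncomputable def WA.pathWeight (A : WA V) {n : ℕ} (p : Fin (n + 1) → A.Q) : ℝ≥0∞ :=
  A.I (p 0) * (∏ i : Fin n, A.w (p i.castSucc) (p i.succ)) * A.F (p (Fin.last n))

/-- Parikh image of a path: the number of `X`-labeled transitions, for each `X : V`. -/
def WA.parikh (A : WA V) {n : ℕ} (p : Fin (n + 1) → A.Q) : V → ℕ := fun X =>
  (Finset.univ.filter fun i : Fin n => A.lab (p i.castSucc) (p i.succ) = some X).card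

/-- Behavior of a weighted automaton, as a map from valuations to `ℝ≥0∞`. -/
noncomputable def WA.behavior (A : WA V) (σ : V → ℕ) : ℝ≥0∞ :=
  ∑' (n : ℕ) (p : {p : Fin (n + 1) → A.Q // A.parikh p = σ}), A.pathWeight p.1

/-- Total mass of a weighted automaton. -/
noncomputable def WA.mass (A : WA V) : ℝ≥0∞ :=
  ∑' σ : V → ℕ, A.behavior σ

/-- Number of transitions with nonzero weight. -/
noncomputable def WA.size (A : WA V) : ℕ :=
  Nat.card {qr : A.Q × A.Q // A.w qr.1 qr.2 ≠ 0}

/-- Deterministic finite automata over alphabet `V` with a finite state type. -/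
structure DFA' (V : Type) where
  S : Type
  [fin : Fintype S]
  [dec : DecidableEq S]
  step : S → V → S
  start : S
  accept : Finset S

attribute [instance] DFA'.fin DFA'.dec

def DFA'.Accepts (B : DFA' V) (w : List V) : Prop :=
  w.foldl B.step B.start ∈ B.accept

/-- The language of `B` is closed under permutations of letters. -/
def DFA'.PermClosed (B : DFA' V) : Prop :=
  ∀ w₁ w₂ : List V, w₁.Perm w₂ → (B.Accepts w₁ ↔ B.Accepts w₂)

/-- Parikh image of a word. -/
def parikhWord (w : List V) : V → ℕ := fun X => w.count X

/-- Product of a weighted automaton with a DFA. -/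
noncomputable def WA.prodDFA (A : WA V) (B : DFA' V) : WA V where
  Q := A.Q × B.S
  w := fun a b =>
    match A.lab a.1 b.1 with
    | some X => if b.2 = B.step a.2 X then A.w a.1 b.1 else 0
    | none => if b.2 = a.2 then A.w a.1 b.1 else 0
  lab := fun a b => A.lab a.1 b.1
  I := fun a => if a.2 = B.start then A.I a.1 else 0
  F := fun a => if a.2 ∈ B.accept then A.F a.1 else 0

/-- `A[X/1]`: relabel every `X`-transition to an `ε`-transition. -/
def WA.subst1 (A : WA V) (X : V) : WA V :=
  { A with lab := fun q r => if A.lab q r = some X then none else A.lab q r }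

/-- `A[X/0]`: set the weight of every `X`-labeled transition to `0`. -/
def WA.subst0 (A : WA V) (X : V) : WA V :=
  { A with w := fun q r => if A.lab q r = some X then 0 else A.w q r }

/-- Weighted disjoint union `A₁ ⊕_{p,q} A₂`. -/
noncomputable def WA.wsum (p q : ℝ≥0∞) (A₁ A₂ : WA V) : WA V where
  Q := A₁.Q ⊕ A₂.Q
  w := fun a b =>
    match a, b with
    | .inl q, .inl r => A₁.w q r
    | .inr q, .inr r => A₂.w q r
    | _, _ => 0
  lab := fun a b =>
    match a, b with
    | .inl q, .inl r => A₁.lab q r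
    | .inr q, .inr r => A₂.lab q r
    | _, _ => none
  I := Sum.elim (fun s => p * A₁.I s) (fun s => q * A₂.I s)
  F := Sum.elim A₁.F A₂.F

/-- Concatenation `A₁ • A₂`. -/
noncomputable def WA.concat (A₁ A₂ : WA V) : WA V where
  Q := A₁.Q ⊕ A₂.Q
  w := fun a b =>
    match a, b with
    | .inl q, .inl r => A₁.w q r
    | .inr s, .inr t => A₂.w s t
    | .inl q, .inr s => A₁.F q * A₂.I s
    | .inr _, .inl _ => 0
  lab := fun a b =>
    match a, b with
    | .inl q, .inl r => A₁.lab q r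
    | .inr s, .inr t => A₂.lab s t
    | _, _ => none
  I := Sum.elim A₁.I (fun _ => 0)
  F := Sum.elim (fun _ => 0) A₂.F

/-- Transition substitution `A₁[Y/A₂]`. -/
noncomputable def WA.tsubst (A₁ : WA V) (Y : V) (A₂ : WA V) : WA V where
  Q := A₁.Q ⊕ (A₁.Q × A₁.Q × A₂.Q)
  w := fun a b =>
    match a, b with
    | .inl q, .inl r => if A₁.lab q r = some Y then 0 else A₁.w q r
    | .inl q, .inr (q', r, s) =>
        if q' = q ∧ A₁.lab q r = some Y then A₁.w q r * A₂.I s else 0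
    | .inr (q, r, s), .inr (q', r', t) =>
        if q' = q ∧ r' = r then A₂.w s t else 0
    | .inr (q, r, s), .inl r' =>
        if r' = r ∧ A₁.lab q r = some Y then A₂.F s else 0
  lab := fun a b =>
    match a, b with
    | .inl q, .inl r => A₁.lab q r
    | .inr (_, _, s), .inr (_, _, t) => A₂.lab s t
    | _, _ => none
  I := Sum.elim A₁.I (fun _ => 0)
  F := Sum.elim A₁.F (fun _ => 0)

/-- The guard DFA `B_{X>0}`. -/
def BXpos (X : V) : DFA' V where
  S := Bool
  step := fun s a => if a = X then true else s
  start := false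
  accept := {true}

/-- The decrement automaton `A^{X--}`. -/
noncomputable def WA.decrA (A : WA V) (X : V) : WA V :=
  let P := A.prodDFA (BXpos X)
  WA.wsum 1 1
    { P with
      lab := fun a b =>
        if a.2 = false ∧ b.2 = true ∧ P.lab a b = some X then none else P.lab a b }
    (A.subst0 X)

/-- Convolution of two maps `(V → ℕ) → ℝ≥0∞`. -/
noncomputable def conv (f g : (V → ℕ) → ℝ≥0∞) : (V → ℕ) → ℝ≥0∞ := fun σ =>
  ∑' p : {p : (V → ℕ) × (V → ℕ) // p.1 + p.2 = σ}, f p.1.1 * g p.1.2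

/-- Indicator (Dirac) function of a valuation. -/
noncomputable def delta (τ : V → ℕ) : (V → ℕ) → ℝ≥0∞ := fun σ => if σ = τ then 1 else 0

/-- `k`-fold convolution power. -/
noncomputable def convPow (g : (V → ℕ) → ℝ≥0∞) : ℕ → ((V → ℕ) → ℝ≥0∞)
  | 0 => delta 0
  | k + 1 => conv (convPow g k) g

/-- Rectangular guards over `V`. -/
inductive Guard (V : Type) : Type where
  | lt : V → ℕ → Guard V
  | mod : V → (n m : ℕ) → n < m → Guard V
  | and : Guard V → Guard V → Guard V
  | not : Guard V → Guard V

/-- Satisfaction of a guard by a valuation. -/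
def Guard.sat : Guard V → (V → ℕ) → Prop
  | .lt X n, σ => σ X < n
  | .mod X n m _, σ => σ X % m = n
  | .and g₁ g₂, σ => g₁.sat σ ∧ g₂.sat σ
  | .not g, σ => ¬g.sat σ

/-- Number of atomic subformulas. -/
def Guard.atoms : Guard V → ℕ
  | .lt _ _ => 1
  | .mod _ _ _ _ => 1
  | .and g₁ g₂ => g₁.atoms + g₂.atoms
  | .not g => g.atoms

/-- All constants in the guard are at most `N`. -/
def Guard.constLe (N : ℕ) : Guard V → Prop
  | .lt _ n => n ≤ N
  | .mod _ n m _ => n ≤ N ∧ m ≤ N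
  | .and g₁ g₂ => g₁.constLe N ∧ g₂.constLe N
  | .not g => g.constLe N

/-- The counting DFA for `X < n`. -/
def ltDFA (X : V) (n : ℕ) : DFA' V where
  S := Fin (n + 1)
  step := fun s a => if a = X then (if h : s.1 < n then ⟨s.1 + 1, by omega⟩ else s) else s
  start := ⟨0, by omega⟩
  accept := Finset.univ.filter fun s => s.1 < n

/-- The counting DFA for `X ≡ n mod m`. -/
def modDFA (X : V) (n m : ℕ) (h : n < m) : DFA' V where
  S := Fin m
  step := fun s a => if a = X then ⟨(s.1 + 1) % m, Nat.mod_lt _ (by omega)⟩ else s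
  start := ⟨0, by omega⟩
  accept := {⟨n, h⟩}

/-- Product DFA. -/
def DFA'.inter (B C : DFA' V) : DFA' V where
  S := B.S × C.S
  step := fun s a => (B.step s.1 a, C.step s.2 a)
  start := (B.start, C.start)
  accept := B.accept ×ˢ C.accept

/-- Complement DFA. -/
def DFA'.compl (B : DFA' V) : DFA' V :=
  { B with accept := B.acceptᶜ }

/-- The guard DFA `B_φ`. -/
def Guard.dfa : Guard V → DFA' V
  | .lt X n => ltDFA X n
  | .mod X n m h => modDFA X n m h
  | .and g₁ g₂ => g₁.dfa.inter g₂.dfa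
  | .not g => g.dfa.compl

/-- Loop-free ReDiP programs; distributions are given by weighted automata. -/
inductive ReDiP (V : Type) : Type 1 where
  | setzero : V → ReDiP V
  | incrConst : V → ℕ → ReDiP V
  | incrDist : V → WA V → ReDiP V
  | incrVar : V → V → ReDiP V
  | iid : V → WA V → V → ReDiP V
  | decr : V → ReDiP V
  | choice : ℝ≥0∞ → ReDiP V → ReDiP V → ReDiP V
  | ite : Guard V → ReDiP V → ReDiP V → ReDiP V
  | observe : Guard V → ReDiP V
  | seq : ReDiP V → ReDiP V → ReDiP V

/-- A distribution automaton for variable `x`: mass exactly `1` and supported on `x`. -/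
def distWf (x : V) (D : WA V) : Prop :=
  D.mass = 1 ∧ ∀ σ : V → ℕ, D.behavior σ ≠ 0 → ∀ y : V, y ≠ x → σ y = 0

/-- Well-formedness of a ReDiP program. -/
def ReDiP.wf : ReDiP V → Prop
  | .incrDist x D => distWf x D
  | .iid x D _ => distWf x D
  | .choice p P₁ P₂ => p ≤ 1 ∧ P₁.wf ∧ P₂.wf
  | .ite _ P₁ P₂ => P₁.wf ∧ P₂.wf
  | .seq P₁ P₂ => P₁.wf ∧ P₂.wf
  | _ => True

/-- `P` contains no `iid` statements. -/
def ReDiP.noIid : ReDiP V → Prop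
  | .iid _ _ _ => False
  | .choice _ P₁ P₂ => P₁.noIid ∧ P₂.noIid
  | .ite _ P₁ P₂ => P₁.noIid ∧ P₂.noIid
  | .seq P₁ P₂ => P₁.noIid ∧ P₂.noIid
  | _ => True

/-- Program size. -/
def ReDiP.size : ReDiP V → ℕ
  | .choice _ P₁ P₂ => 1 + P₁.size + P₂.size
  | .ite _ P₁ P₂ => 1 + P₁.size + P₂.size
  | .seq P₁ P₂ => P₁.size + P₂.size
  | _ => 1

/-- The `(n+1)`-state chain of `X`-transitions (Dirac distribution `δ_n` on `X`). -/
noncomputable def chainX (X : V) (n : ℕ) : WA V where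
  Q := Fin (n + 1)
  w := fun i j => if j.1 = i.1 + 1 then 1 else 0
  lab := fun i j => if j.1 = i.1 + 1 then some X else none
  I := fun i => if i = ⟨0, by omega⟩ then 1 else 0
  F := fun i => if i = Fin.last n then 1 else 0

/-- The three-state chain with one `Y`-transition followed by one `X`-transition. -/
noncomputable def chainYX (Y X : V) : WA V where
  Q := Fin 3
  w := fun i j => if j.1 = i.1 + 1 then 1 else 0
  lab := fun i j => if j.1 = i.1 + 1 then (if i.1 = 0 then some Y else some X) else none
  I := fun i => if i = 0 then 1 else 0
  F := fun i => if i = Fin.last 2 then 1 else 0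

/-- The two-state automaton with a single `Y`-transition. -/
noncomputable def singleY (Y : V) : WA V := chainX Y 1

/-- The automata translation of a ReDiP program (Table 2). -/
noncomputable def ReDiP.sem : ReDiP V → WA V → WA V
  | .setzero x, A => A.subst1 x
  | .incrConst x n, A => A.concat (chainX x n)
  | .incrDist _ D, A => A.concat D
  | .incrVar x y, A => A.tsubst y (chainYX y x)
  | .iid _ D y, A => A.tsubst y ((singleY y).concat D)
  | .decr x, A => A.decrA x
  | .choice p P₁ P₂, A => WA.wsum p (1 - p) (P₁.sem A) (P₂.sem A)
  | .ite φ P₁ P₂, A =>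
      WA.wsum 1 1 (P₁.sem (A.prodDFA φ.dfa)) (P₂.sem (A.prodDFA (Guard.not φ).dfa))
  | .observe φ, A => A.prodDFA φ.dfa
  | .seq P₁ P₂, A => P₂.sem (P₁.sem A)

/-- The parameters (distribution automata sizes, constants, guard atoms) of `P` are
bounded by `d`, `N` and `η`, respectively. -/
def ReDiP.boundedBy (d N η : ℕ) : ReDiP V → Prop
  | .setzero _ => True
  | .incrConst _ n => n ≤ N
  | .incrDist _ D => D.size ≤ d
  | .incrVar _ _ => True
  | .iid _ D _ => D.size ≤ d
  | .decr _ => True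
  | .choice _ P₁ P₂ => P₁.boundedBy d N η ∧ P₂.boundedBy d N η
  | .ite φ P₁ P₂ =>
      φ.atoms ≤ η ∧ φ.constLe N ∧ P₁.boundedBy d N η ∧ P₂.boundedBy d N η
  | .observe φ => φ.atoms ≤ η ∧ φ.constLe N
  | .seq P₁ P₂ => P₁.boundedBy d N η ∧ P₂.boundedBy d N η

/-- Configurations of the operational Markov chain. -/
inductive Conf (V : Type) : Type 1 where
  | run : ReDiP V → (V → ℕ) → Conf V
  | term : (V → ℕ) → Conf V
  | err : Conf V

/-- One-step transition probabilities of the operational Markov chain from `⟨P, σ⟩`. -/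
noncomputable def pstep : ReDiP V → (V → ℕ) → Conf V → ℝ≥0∞
  | .setzero x, σ, c => if c = Conf.term (Function.update σ x 0) then 1 else 0
  | .incrConst x n, σ, c => if c = Conf.term (Function.update σ x (σ x + n)) then 1 else 0
  | .incrDist x D, σ, c =>
      ∑' n : ℕ,
        if c = Conf.term (Function.update σ x (σ x + n)) then
          D.behavior (fun y => if y = x then n else 0)
        else 0
  | .incrVar x y, σ, c => if c = Conf.term (Function.update σ x (σ x + σ y)) then 1 else 0
  | .iid _ _ _, _, _ => 0
  | .decr x, σ, c => if c = Conf.term (Function.update σ x (σ x - 1)) then 1 else 0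
  | .choice p P₁ P₂, σ, c =>
      (if c = Conf.run P₁ σ then p else 0) + (if c = Conf.run P₂ σ then 1 - p else 0)
  | .ite φ P₁ P₂, σ, c =>
      if φ.sat σ then (if c = Conf.run P₁ σ then 1 else 0)
      else (if c = Conf.run P₂ σ then 1 else 0)
  | .observe φ, σ, c =>
      if φ.sat σ then (if c = Conf.term σ then 1 else 0)
      else (if c = Conf.err then 1 else 0)
  | .seq P₁ P₂, σ, c =>
      match c with
      | .run Q σ' =>
          (if Q = P₂ then pstep P₁ σ (Conf.term σ') else 0) +
          (match Q with
           | .seq P₁' P₂' => if P₂' = P₂ then pstep P₁ σ (Conf.run P₁' σ') else 0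
           | _ => 0)
      | .term _ => 0
      | .err => pstep P₁ σ Conf.err

/-- Transition probabilities between configurations (terminal and error states are absorbing
with no outgoing transitions). -/
noncomputable def cstep : Conf V → Conf V → ℝ≥0∞
  | .run P σ, c => pstep P σ c
  | _, _ => 0

/-- Initial distribution of the operational Markov chain `M(A, P)`. -/
noncomputable def mcInit (A : WA V) (P : ReDiP V) : Conf V → ℝ≥0∞
  | .run P' σ => if P' = P then A.behavior σ else 0
  | _ => 0

/-- Reachability probability `Pr^{M(A,P)}(◇ t)`: the sum over all finite sequences of
configurations ending at `t` and avoiding `t` before, of the initial weight of the first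
configuration times the product of the transition probabilities. -/
noncomputable def reachProb (A : WA V) (P : ReDiP V) (t : Conf V) : ℝ≥0∞ :=
  ∑' (k : ℕ)
      (p : {p : Fin (k + 1) → Conf V //
            p (Fin.last k) = t ∧ ∀ i : Fin k, p i.castSucc ≠ t}),
    mcInit A P (p.1 0) * ∏ i : Fin k, cstep (p.1 i.castSucc) (p.1 i.succ)

section Decr
set_option linter.unusedSectionVars false

variable {V : Type} [Fintype V] [DecidableEq V]

/-- Per-length sum of path weights with given Parikh image. -/
noncomputable def pS (A : WA V) (σ : V → ℕ) (n : ℕ) : ℝ≥0∞ :=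
  ∑ p : Fin (n + 1) → A.Q, if A.parikh p = σ then A.pathWeight p else 0

lemma behavior_eq_pS (A : WA V) (σ : V → ℕ) : A.behavior σ = ∑' n, pS A σ n := by
  unfold WA.behavior pS
  congr 1
  funext n
  calc ∑' (p : {p : Fin (n + 1) → A.Q // A.parikh p = σ}), A.pathWeight p.1
      = ∑' p : Fin (n + 1) → A.Q,
          Set.indicator {p : Fin (n + 1) → A.Q | A.parikh p = σ} A.pathWeight p :=
        tsum_subtype _ _
    _ = ∑ p : Fin (n + 1) → A.Q, if A.parikh p = σ then A.pathWeight p else 0 := by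
        rw [tsum_fintype]
        exact Finset.sum_congr rfl fun p _ => by simp [Set.indicator_apply]

lemma finInd {n : ℕ} (P : Fin (n + 1) → Prop) (h0 : P 0)
    (hs : ∀ i : Fin n, P i.castSucc → P i.succ) : ∀ i, P i := by
  intro ⟨k, hk⟩
  induction k with
  | zero => exact h0
  | succ k ih =>
    have hk' : k < n := by omega
    exact hs ⟨k, hk'⟩ (ih (by omega))

lemma pathWeight_ne_zero {A : WA V} {n : ℕ} {p : Fin (n + 1) → A.Q}
    (h : A.pathWeight p ≠ 0) :
    A.I (p 0) ≠ 0 ∧ (∀ i : Fin n, A.w (p i.castSucc) (p i.succ) ≠ 0) ∧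
      A.F (p (Fin.last n)) ≠ 0 := by
  unfold WA.pathWeight at h
  simp only [ne_eq, mul_eq_zero, not_or, Finset.prod_eq_zero_iff] at h
  refine ⟨h.1.1, fun i => ?_, h.2⟩
  intro hw
  exact h.1.2 ⟨i, Finset.mem_univ i, hw⟩

lemma parikh_eq_of_lab {A B : WA V} {n : ℕ} {p : Fin (n + 1) → A.Q} {q : Fin (n + 1) → B.Q}
    (h : ∀ i : Fin n, A.lab (p i.castSucc) (p i.succ) = B.lab (q i.castSucc) (q i.succ)) :
    A.parikh p = B.parikh q := by
  funext Y
  unfold WA.parikh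
  congr 1
  apply Finset.filter_congr
  intro i _
  rw [h]

end Decr
section Decr2
set_option linter.unusedSectionVars false

variable {V : Type} [Fintype V] [DecidableEq V]

lemma wsum_pathWeight_inl (A₁ A₂ : WA V) {n : ℕ} (p : Fin (n + 1) → A₁.Q) :
    (WA.wsum 1 1 A₁ A₂).pathWeight (fun i => Sum.inl (p i)) = A₁.pathWeight p := by
  simp [WA.wsum, WA.pathWeight]

lemma wsum_pathWeight_inr (A₁ A₂ : WA V) {n : ℕ} (p : Fin (n + 1) → A₂.Q) :
    (WA.wsum 1 1 A₁ A₂).pathWeight (fun i => Sum.inr (p i)) = A₂.pathWeight p := by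
  simp [WA.wsum, WA.pathWeight]

lemma wsum_parikh_inl (A₁ A₂ : WA V) {n : ℕ} (p : Fin (n + 1) → A₁.Q) :
    (WA.wsum 1 1 A₁ A₂).parikh (fun i => Sum.inl (p i)) = A₁.parikh p :=
  (parikh_eq_of_lab fun _ => rfl).symm

lemma wsum_parikh_inr (A₁ A₂ : WA V) {n : ℕ} (p : Fin (n + 1) → A₂.Q) :
    (WA.wsum 1 1 A₁ A₂).parikh (fun i => Sum.inr (p i)) = A₂.parikh p :=
  (parikh_eq_of_lab fun _ => rfl).symm

lemma wsum_path_cases {A₁ A₂ : WA V} {n : ℕ} {q : Fin (n + 1) → A₁.Q ⊕ A₂.Q}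
    (h : (WA.wsum 1 1 A₁ A₂).pathWeight q ≠ 0) :
    (∃ p : Fin (n + 1) → A₁.Q, q = fun i => Sum.inl (p i)) ∨
      (∃ p : Fin (n + 1) → A₂.Q, q = fun i => Sum.inr (p i)) := by
  obtain ⟨-, hw, -⟩ := pathWeight_ne_zero h
  cases hq0 : q 0 with
  | inl a =>
    left
    have key : ∀ i, ∃ b, q i = Sum.inl b := by
      refine finInd _ ⟨a, hq0⟩ ?_
      intro i ⟨b, hb⟩
      cases hsucc : q i.succ with
      | inl c => exact ⟨c, rfl⟩
      | inr c =>
        exfalso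
        apply hw i
        rw [hb, hsucc]
        rfl
    exact ⟨fun i => (key i).choose, funext fun i => (key i).choose_spec⟩
  | inr a =>
    right
    have key : ∀ i, ∃ b, q i = Sum.inr b := by
      refine finInd _ ⟨a, hq0⟩ ?_
      intro i ⟨b, hb⟩
      cases hsucc : q i.succ with
      | inr c => exact ⟨c, rfl⟩
      | inl c =>
        exfalso
        apply hw i
        rw [hb, hsucc]
        rfl
    exact ⟨fun i => (key i).choose, funext fun i => (key i).choose_spec⟩

lemma pS_wsum (A₁ A₂ : WA V) (σ : V → ℕ) (n : ℕ) :
    pS (WA.wsum 1 1 A₁ A₂) σ n = pS A₁ σ n + pS A₂ σ n := by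
  classical
  have hr : pS A₁ σ n + pS A₂ σ n =
      ∑ x : (Fin (n + 1) → A₁.Q) ⊕ (Fin (n + 1) → A₂.Q),
        Sum.elim (fun p => if A₁.parikh p = σ then A₁.pathWeight p else 0)
          (fun p => if A₂.parikh p = σ then A₂.pathWeight p else 0) x := by
    rw [Fintype.sum_sum_type]
    rfl
  rw [hr]
  unfold pS
  refine (Finset.sum_bij_ne_zero
    (i := fun x _ _ => Sum.elim (fun p i => Sum.inl (p i)) (fun p i => Sum.inr (p i)) x)
    (fun _ _ _ => Finset.mem_univ _) ?_ ?_ ?_).symm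
  · -- injectivity
    rintro (p₁ | p₁) h₁₁ h₁₂ (p₂ | p₂) h₂₁ h₂₂ heq
    · congr 1
      funext i
      exact Sum.inl.inj (congrFun heq i)
    · exact absurd (congrFun heq 0) (by intro h; cases h)
    · exact absurd (congrFun heq 0) (by intro h; cases h)
    · congr 1
      funext i
      exact Sum.inr.inj (congrFun heq i)
  · -- surjectivity
    intro q _ hq
    have hq' : (WA.wsum 1 1 A₁ A₂).pathWeight q ≠ 0 := by
      intro h0
      apply hq
      split <;> simp [h0]
    rcases wsum_path_cases hq' with ⟨p, rfl⟩ | ⟨p, rfl⟩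
    · refine ⟨Sum.inl p, Finset.mem_univ _, ?_, rfl⟩
      simpa [wsum_parikh_inl, wsum_pathWeight_inl] using hq
    · refine ⟨Sum.inr p, Finset.mem_univ _, ?_, rfl⟩
      simpa [wsum_parikh_inr, wsum_pathWeight_inr] using hq
  · -- values
    rintro (p | p) h₁ h₂
    · show _ = if (WA.wsum 1 1 A₁ A₂).parikh (fun i => Sum.inl (p i)) = σ then
        (WA.wsum 1 1 A₁ A₂).pathWeight (fun i => Sum.inl (p i)) else 0
      rw [wsum_parikh_inl, wsum_pathWeight_inl]
      rfl
    · show _ = if (WA.wsum 1 1 A₁ A₂).parikh (fun i => Sum.inr (p i)) = σ then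
        (WA.wsum 1 1 A₁ A₂).pathWeight (fun i => Sum.inr (p i)) else 0
      rw [wsum_parikh_inr, wsum_pathWeight_inr]
      rfl

end Decr2
section Decr3
set_option linter.unusedSectionVars false

variable {V : Type} [Fintype V] [DecidableEq V]

lemma parikh_subst0 (A : WA V) (X : V) {n : ℕ} (p : Fin (n + 1) → A.Q) :
    (A.subst0 X).parikh p = A.parikh p :=
  parikh_eq_of_lab fun _ => rfl

lemma parikh_eq_zero_iff (A : WA V) (X : V) {n : ℕ} (p : Fin (n + 1) → A.Q) :
    A.parikh p X = 0 ↔ ∀ i : Fin n, A.lab (p i.castSucc) (p i.succ) ≠ some X := by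
  unfold WA.parikh
  rw [Finset.card_eq_zero, Finset.filter_eq_empty_iff]
  simp

lemma pS_subst0 (A : WA V) (X : V) (σ : V → ℕ) (n : ℕ) :
    pS (A.subst0 X) σ n = if σ X = 0 then pS A σ n else 0 := by
  unfold pS
  split_ifs with h
  · refine Finset.sum_congr rfl fun p _ => ?_
    rw [show (A.subst0 X).parikh p = A.parikh p from parikh_subst0 A X p]
    split_ifs with hp
    · have hX : A.parikh p X = 0 := by rw [hp]; exact h
      rw [parikh_eq_zero_iff A X p] at hX
      unfold WA.pathWeight
      have : ∀ i : Fin n,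
          (A.subst0 X).w (p i.castSucc) (p i.succ) = A.w (p i.castSucc) (p i.succ) := by
        intro i
        simp only [WA.subst0]
        rw [if_neg (hX i)]
      rw [Finset.prod_congr rfl fun i _ => this i]
      rfl
    · rfl
  · refine Finset.sum_eq_zero fun p _ => ?_
    rw [show (A.subst0 X).parikh p = A.parikh p from parikh_subst0 A X p]
    split_ifs with hp
    · have hX : A.parikh p X ≠ 0 := by rw [hp]; exact h
      simp only [ne_eq, parikh_eq_zero_iff A X p] at hX
      push_neg at hX
      obtain ⟨i, hi⟩ := hX
      unfold WA.pathWeight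
      have : (A.subst0 X).w (p i.castSucc) (p i.succ) = 0 := by
        simp only [WA.subst0]
        rw [if_pos hi]
      rw [Finset.prod_eq_zero (Finset.mem_univ i) this]
      simp
    · rfl

end Decr3
section Decr4
set_option linter.unusedSectionVars false

variable {V : Type} [Fintype V] [DecidableEq V]

/-- The left component of the decrement automaton. -/
noncomputable def decL (A : WA V) (X : V) : WA V :=
  { A.prodDFA (BXpos X) with
    lab := fun a b =>
      if a.2 = false ∧ b.2 = true ∧ (A.prodDFA (BXpos X)).lab a b = some X then none
      else (A.prodDFA (BXpos X)).lab a b }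

lemma decrA_eq (A : WA V) (X : V) :
    A.decrA X = WA.wsum 1 1 (decL A X) (A.subst0 X) := rfl

/-- Whether an `X`-labeled transition occurs strictly before position `i`. -/
noncomputable def sB (A : WA V) (X : V) {n : ℕ} (p : Fin (n + 1) → A.Q) (i : Fin (n + 1)) :
    Bool :=
  if ∃ j : Fin n, (j : ℕ) < (i : ℕ) ∧ A.lab (p j.castSucc) (p j.succ) = some X then true
  else false

lemma sB_iff (A : WA V) (X : V) {n : ℕ} (p : Fin (n + 1) → A.Q) (i : Fin (n + 1)) :
    sB A X p i = true ↔
      ∃ j : Fin n, (j : ℕ) < (i : ℕ) ∧ A.lab (p j.castSucc) (p j.succ) = some X := by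
  unfold sB
  split <;> simp_all

lemma sB_zero (A : WA V) (X : V) {n : ℕ} (p : Fin (n + 1) → A.Q) :
    sB A X p 0 = false := by
  rw [Bool.eq_false_iff]
  intro h
  obtain ⟨j, hj, -⟩ := (sB_iff A X p 0).mp h
  simp at hj

lemma sB_succ_iff (A : WA V) (X : V) {n : ℕ} (p : Fin (n + 1) → A.Q) (i : Fin n) :
    sB A X p i.succ = true ↔
      (sB A X p i.castSucc = true ∨ A.lab (p i.castSucc) (p i.succ) = some X) := by
  rw [sB_iff, sB_iff]
  constructor
  · rintro ⟨j, hj, hl⟩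
    rw [Fin.val_succ] at hj
    rcases Nat.lt_or_ge (j : ℕ) (i : ℕ) with h | h
    · exact Or.inl ⟨j, by simpa using h, hl⟩
    · have : j = i := Fin.ext (by omega)
      subst this
      exact Or.inr hl
  · rintro (⟨j, hj, hl⟩ | hl)
    · exact ⟨j, by simp at hj ⊢; omega, hl⟩
    · exact ⟨i, by simp, hl⟩

lemma sB_last_iff (A : WA V) (X : V) {n : ℕ} (p : Fin (n + 1) → A.Q) :
    sB A X p (Fin.last n) = true ↔ A.parikh p X ≠ 0 := by
  rw [sB_iff]
  rw [ne_eq, parikh_eq_zero_iff]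
  push_neg
  constructor
  · rintro ⟨j, -, hl⟩; exact ⟨j, hl⟩
  · rintro ⟨j, hl⟩; exact ⟨j, by simp [Fin.val_last, j.isLt], hl⟩

/-- The canonical lift of a path of `A` to a path of `decL A X`. -/
noncomputable def canon (A : WA V) (X : V) {n : ℕ} (p : Fin (n + 1) → A.Q) :
    Fin (n + 1) → A.Q × Bool := fun i => (p i, sB A X p i)

lemma decL_lab_canon (A : WA V) (X : V) {n : ℕ} (p : Fin (n + 1) → A.Q) (i : Fin n) (Y : V) :
    (decL A X).lab (canon A X p i.castSucc) (canon A X p i.succ) = some Y ↔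
      (A.lab (p i.castSucc) (p i.succ) = some Y ∧ (Y = X → sB A X p i.castSucc = true)) := by
  have hP : (A.prodDFA (BXpos X)).lab (canon A X p i.castSucc) (canon A X p i.succ) =
      A.lab (p i.castSucc) (p i.succ) := rfl
  simp only [decL]
  rw [hP]
  simp only [canon]
  by_cases hC : sB A X p i.castSucc = false ∧ sB A X p i.succ = true ∧
      A.lab (p i.castSucc) (p i.succ) = some X
  · erw [if_pos hC]
    simp only [reduceCtorEq, false_iff, not_and]
    intro hl hYX
    rw [hl] at hC
    have : Y = X := by
      have := hC.2.2
      simp at this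
      exact this
    rw [hYX this] at hC
    simp at hC
  · erw [if_neg hC]
    constructor
    · intro hl
      refine ⟨hl, fun hYX => ?_⟩
      by_contra hcs
      rw [Bool.not_eq_true] at hcs
      have hlX : A.lab (p i.castSucc) (p i.succ) = some X := by rw [hl, hYX]
      have hsucc : sB A X p i.succ = true := (sB_succ_iff A X p i).mpr (Or.inr hlX)
      exact hC ⟨hcs, hsucc, hlX⟩
    · exact fun h => h.1

lemma parikh_canon_ne (A : WA V) (X : V) {n : ℕ} (p : Fin (n + 1) → A.Q) {Y : V}
    (hY : Y ≠ X) : (decL A X).parikh (canon A X p) Y = A.parikh p Y := by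
  unfold WA.parikh
  congr 1
  apply Finset.filter_congr
  intro i _
  rw [decL_lab_canon]
  simp [hY]

lemma parikh_canon_X (A : WA V) (X : V) {n : ℕ} (p : Fin (n + 1) → A.Q) :
    (decL A X).parikh (canon A X p) X = A.parikh p X - 1 := by
  classical
  unfold WA.parikh
  set S : Finset (Fin n) :=
    Finset.univ.filter fun i => A.lab (p i.castSucc) (p i.succ) = some X with hS
  have hfil : (Finset.univ.filter fun i : Fin n =>
      (decL A X).lab (canon A X p i.castSucc) (canon A X p i.succ) = some X) =
      S.filter fun i => sB A X p i.castSucc = true := by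
    ext i
    simp only [Finset.mem_filter, Finset.mem_univ, true_and, hS]
    rw [decL_lab_canon]
    constructor
    · rintro ⟨hl, h⟩; exact ⟨hl, h rfl⟩
    · rintro ⟨hl, h⟩; exact ⟨hl, fun _ => h⟩
  rw [hfil]
  rcases eq_or_ne S ∅ with hE | hNE
  · rw [hE]
    simp
  · have hne : S.Nonempty := Finset.nonempty_of_ne_empty hNE
    set m := S.min' hne with hm
    have : S.filter (fun i => sB A X p i.castSucc = true) = S.erase m := by
      ext i
      simp only [Finset.mem_filter, Finset.mem_erase]
      constructor
      · rintro ⟨hi, hsb⟩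
        refine ⟨?_, hi⟩
        obtain ⟨j, hj, hl⟩ := (sB_iff A X p i.castSucc).mp hsb
        have hjS : j ∈ S := by simp [hS, hl]
        have hmj : m ≤ j := Finset.min'_le S j hjS
        intro hchain
        have h1 : ((m : Fin n) : ℕ) ≤ (j : ℕ) := hmj
        rw [Fin.coe_castSucc, hchain] at hj
        omega
      · rintro ⟨hne', hi⟩
        refine ⟨hi, ?_⟩
        rw [sB_iff]
        refine ⟨m, ?_, ?_⟩
        · have hmi : m ≤ i := Finset.min'_le S i hi
          have : m ≠ i := fun h => hne' h.symm
          rw [Fin.coe_castSucc]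
          have := Fin.lt_or_eq_of_le hmi
          rcases this with h | h
          · exact h
          · exact absurd h ‹m ≠ i›
        · have : m ∈ S := S.min'_mem hne
          simpa [hS] using this
    rw [this, Finset.card_erase_of_mem (S.min'_mem hne)]

end Decr4
section Decr5
set_option linter.unusedSectionVars false

variable {V : Type} [Fintype V] [DecidableEq V]

lemma decL_w_canon (A : WA V) (X : V) {n : ℕ} (p : Fin (n + 1) → A.Q) (i : Fin n) :
    (decL A X).w (canon A X p i.castSucc) (canon A X p i.succ) =
      A.w (p i.castSucc) (p i.succ) := by
  cases hl : A.lab (p i.castSucc) (p i.succ) with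
  | none =>
    have hsb : sB A X p i.succ = sB A X p i.castSucc := by
      rw [Bool.eq_iff_iff, sB_succ_iff, hl]
      simp
    simp [decL, WA.prodDFA, canon, hl, hsb]
    exact fun h => absurd rfl h
  | some Y =>
    rcases eq_or_ne X Y with rfl | hXY
    · have hsb : sB A X p i.succ = true := (sB_succ_iff _ _ _ _).mpr (Or.inr hl)
      simp [decL, WA.prodDFA, BXpos, canon, hl, hsb]
    · have hsb : sB A X p i.succ = sB A X p i.castSucc := by
        rw [Bool.eq_iff_iff, sB_succ_iff, hl]
        simp [Ne.symm hXY]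
      simp [decL, WA.prodDFA, BXpos, canon, hl, hsb, Ne.symm hXY]

lemma pathWeight_canon (A : WA V) (X : V) {n : ℕ} (p : Fin (n + 1) → A.Q) :
    (decL A X).pathWeight (canon A X p) =
      A.I (p 0) * (∏ i : Fin n, A.w (p i.castSucc) (p i.succ)) *
        (if sB A X p (Fin.last n) = true then A.F (p (Fin.last n)) else 0) := by
  unfold WA.pathWeight
  have hI : (decL A X).I (canon A X p 0) = A.I (p 0) := by
    simp [decL, WA.prodDFA, BXpos, canon, sB_zero]
  have hF : (decL A X).F (canon A X p (Fin.last n)) =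
      (if sB A X p (Fin.last n) = true then A.F (p (Fin.last n)) else 0) := by
    simp [decL, WA.prodDFA, BXpos, canon]
  rw [hI, hF, Finset.prod_congr rfl fun i _ => decL_w_canon A X p i]

lemma snd_eq_sB (A : WA V) (X : V) {n : ℕ} {q : Fin (n + 1) → A.Q × Bool}
    (h : (decL A X).pathWeight q ≠ 0) :
    ∀ i, (q i).2 = sB A X (fun j => (q j).1) i := by
  obtain ⟨hI, hw, hF⟩ := pathWeight_ne_zero h
  refine finInd _ ?_ ?_
  · cases hb : (q 0).2 with
    | false => rw [sB_zero]
    | true =>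
      exfalso
      apply hI
      simp [decL, WA.prodDFA, BXpos, hb]
  · intro i ih
    have hwi := hw i
    cases hl : A.lab ((q i.castSucc).1) ((q i.succ).1) with
    | none =>
      simp only [decL, WA.prodDFA, BXpos, hl, ne_eq, ite_eq_right_iff, not_forall] at hwi
      obtain ⟨hcond, -⟩ := hwi
      rw [hcond, ih, Bool.eq_iff_iff, sB_succ_iff]
      simp [hl]
    | some Y =>
      simp only [decL, WA.prodDFA, BXpos, hl, ne_eq, ite_eq_right_iff, not_forall] at hwi
      obtain ⟨hcond, -⟩ := hwi
      rcases eq_or_ne X Y with rfl | hXY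
      · simp at hcond
        rw [hcond, Eq.comm, sB_succ_iff]
        exact Or.inr hl
      · rw [if_neg (Ne.symm hXY)] at hcond
        rw [hcond, ih, Bool.eq_iff_iff, sB_succ_iff]
        simp [hl, Ne.symm hXY]

lemma eq_canon (A : WA V) (X : V) {n : ℕ} {q : Fin (n + 1) → A.Q × Bool}
    (h : (decL A X).pathWeight q ≠ 0) :
    q = canon A X (fun j => (q j).1) :=
  funext fun i => Prod.ext rfl (snd_eq_sB A X h i)

lemma pS_decL (A : WA V) (X : V) (σ : V → ℕ) (n : ℕ) :
    pS (decL A X) σ n = pS A (Function.update σ X (σ X + 1)) n := by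
  classical
  unfold pS
  have hterm : ∀ q : Fin (n + 1) → A.Q × Bool,
      (if (decL A X).parikh q = σ then (decL A X).pathWeight q else 0) ≠ 0 →
        (decL A X).parikh q = σ ∧ (decL A X).pathWeight q ≠ 0 := by
    intro q hq
    by_cases hc : (decL A X).parikh q = σ
    · exact ⟨hc, by simpa [hc] using hq⟩
    · simp [hc] at hq
  refine Finset.sum_bij_ne_zero (i := fun q _ _ => fun j => (q j).1)
    (fun _ _ _ => Finset.mem_univ _) ?_ ?_ ?_
  · -- injectivity
    intro q₁ h₁₁ h₁₂ q₂ h₂₁ h₂₂ heq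
    obtain ⟨-, hW₁⟩ := hterm q₁ h₁₂
    obtain ⟨-, hW₂⟩ := hterm q₂ h₂₂
    have heq' : (fun j => (q₁ j).1) = (fun j => (q₂ j).1) := heq
    rw [eq_canon A X hW₁, eq_canon A X hW₂, heq']
  · -- surjectivity
    intro p _ hp
    have hc : A.parikh p = Function.update σ X (σ X + 1) := by
      by_cases hc : A.parikh p = Function.update σ X (σ X + 1)
      · exact hc
      · simp [hc] at hp
    have hW : A.pathWeight p ≠ 0 := by simpa [hc] using hp
    have hpx : A.parikh p X ≠ 0 := by
      rw [hc, Function.update_self]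
      omega
    have hlast : sB A X p (Fin.last n) = true := (sB_last_iff A X p).mpr hpx
    have hparikh : (decL A X).parikh (canon A X p) = σ := by
      funext Z
      by_cases hZ : Z = X
      · rw [hZ, parikh_canon_X, hc, Function.update_self]
        omega
      · rw [parikh_canon_ne A X p hZ, hc, Function.update_of_ne hZ]
    have hweight : (decL A X).pathWeight (canon A X p) = A.pathWeight p := by
      rw [pathWeight_canon, if_pos hlast]
      rfl
    refine ⟨canon A X p, Finset.mem_univ _, ?_, rfl⟩
    rw [hparikh, if_pos rfl, hweight]
    exact hW
  · -- values
    intro q h₁ h₂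
    show (if (decL A X).parikh q = σ then (decL A X).pathWeight q else 0) =
        (if A.parikh (fun j => (q j).1) = Function.update σ X (σ X + 1)
          then A.pathWeight (fun j => (q j).1) else 0)
    obtain ⟨hparikh, hW⟩ := hterm q h₂
    set p : Fin (n + 1) → A.Q := fun j => (q j).1 with hp
    have hq : q = canon A X p := eq_canon A X hW
    have hlast : sB A X p (Fin.last n) = true := by
      by_contra hb
      apply hW
      rw [hq, pathWeight_canon, if_neg hb]
      simp
    have hpx : A.parikh p X ≠ 0 := (sB_last_iff A X p).mp hlast
    have hτ : A.parikh p = Function.update σ X (σ X + 1) := by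
      funext Z
      by_cases hZ : Z = X
      · rw [hZ, Function.update_self]
        have h1 : (decL A X).parikh (canon A X p) X = A.parikh p X - 1 :=
          parikh_canon_X A X p
        rw [← hq, hparikh] at h1
        omega
      · rw [Function.update_of_ne hZ]
        have h1 : (decL A X).parikh (canon A X p) Z = A.parikh p Z :=
          parikh_canon_ne A X p hZ
        rw [← hq, hparikh] at h1
        exact h1.symm
    rw [if_pos hparikh, if_pos hτ, hq, pathWeight_canon, if_pos hlast]
    rfl

end Decr5
/-- the decrement construction implements truncated decrement of `X`. -/
theorem stmt_8 (V : Type) [Fintype V] [DecidableEq V] (A : WA V) (X : V) (σ : V → ℕ) :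
    (A.decrA X).behavior σ =
      A.behavior (Function.update σ X (σ X + 1)) +
        (if σ X = 0 then A.behavior σ else 0) := by
  rw [decrA_eq, behavior_eq_pS]
  have hsplit : ∀ n, pS (WA.wsum 1 1 (decL A X) (A.subst0 X)) σ n =
      pS A (Function.update σ X (σ X + 1)) n + pS (A.subst0 X) σ n := by
    intro n
    rw [pS_wsum, pS_decL]
  rw [tsum_congr hsplit, ENNReal.tsum_add, ← behavior_eq_pS]
  congr 1
  by_cases h : σ X = 0
  · rw [if_pos h, behavior_eq_pS]
    exact tsum_congr fun n => by rw [pS_subst0, if_pos h]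
  · rw [if_neg h]
    refine (tsum_congr fun n => by rw [pS_subst0, if_neg h]).trans tsum_zero
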